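/- Let ρ_1, ..., ρ_n be nonnegative reals with ∑_j ρ_j ≥ ε³/8 and ∑_j √ρ_j ≤ 2ε⁻¹√d for some ε ∈ (0,1] and d > 0. Let C be the smallest set of indices (taken in decreasing order of ρ) such that ∑_{j ∈ C} ρ_j ≥ (1/2) ∑_j ρ_j. Then |C| ≤ 144 ε⁻⁵ d. -/
import Mathlib


theorem stmt_15 (n : ℕ) (ρ : Fin n → ℝ) (ε d : ℝ)
    (hnn : ∀ j, 0 ≤ ρ j) (hmono : Antitone ρ)
    (hε : ε ∈ Set.Ioc (0 : ℝ) 1) (hd : 0 < d)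
    (hsum : ε ^ 3 / 8 ≤ ∑ j, ρ j)
    (hsqrt : ∑ j, Real.sqrt (ρ j) ≤ 2 * ε⁻¹ * Real.sqrt d)
    (k : ℕ)
    (hk : (1 / 2) * ∑ j, ρ j ≤ ∑ j ∈ Finset.univ.filter (fun j : Fin n => (j : ℕ) < k), ρ j)
    (hkmin : ∀ k' < k,
      ∑ j ∈ Finset.univ.filter (fun j : Fin n => (j : ℕ) < k'), ρ j < (1 / 2) * ∑ j, ρ j) :
    (k : ℝ) ≤ 144 * ε⁻¹ ^ 5 * d := by
  obtain ⟨hε0, hε1⟩ := hε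
  have hεi : 0 < ε⁻¹ := by positivity
  set S := ∑ j, ρ j with hSdef
  have hS0 : 0 < S := lt_of_lt_of_le (by positivity) hsum
  rcases Nat.eq_zero_or_pos k with hk0 | hkpos
  · simp [hk0]; positivity
  have hkn : k ≤ n := by
    by_contra h
    push_neg at h
    have h2 := hkmin n h
    have heq : (Finset.univ.filter (fun j : Fin n => (j : ℕ) < n)) = Finset.univ := by
      ext j; simp [j.isLt]
    rw [heq] at h2
    simp only [← hSdef] at h2
    linarith
  have hm : k - 1 < n := by omega
  set m : Fin n := ⟨k - 1, hm⟩ with hmdef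
  have hprefix := hkmin (k - 1) (by omega)
  have hsplit : ∑ j ∈ Finset.univ.filter (fun j : Fin n => (j : ℕ) < k - 1), ρ j
      + ∑ j ∈ Finset.univ.filter (fun j : Fin n => ¬ (j : ℕ) < k - 1), ρ j = S :=
    Finset.sum_filter_add_sum_filter_not _ _ _
  have htail : S / 2 < ∑ j ∈ Finset.univ.filter (fun j : Fin n => ¬ (j : ℕ) < k - 1), ρ j := by
    linarith
  set r := Real.sqrt (ρ m) with hrdef
  set T := ∑ j, Real.sqrt (ρ j) with hTdef
  have hr0 : 0 ≤ r := Real.sqrt_nonneg _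
  have hT0 : 0 ≤ T := Finset.sum_nonneg fun j _ => Real.sqrt_nonneg _
  have hB : ∑ j ∈ Finset.univ.filter (fun j : Fin n => ¬ (j : ℕ) < k - 1), ρ j ≤ r * T := by
    calc ∑ j ∈ Finset.univ.filter (fun j : Fin n => ¬ (j : ℕ) < k - 1), ρ j
        ≤ ∑ j ∈ Finset.univ.filter (fun j : Fin n => ¬ (j : ℕ) < k - 1), r * Real.sqrt (ρ j) := by
          apply Finset.sum_le_sum
          intro j hj
          simp only [Finset.mem_filter, Finset.mem_univ, true_and, not_lt] at hj
          have hle : ρ j ≤ ρ m := hmono (by simp [Fin.le_def, hmdef]; omega)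
          have hρj : ρ j = Real.sqrt (ρ j) * Real.sqrt (ρ j) := (Real.mul_self_sqrt (hnn j)).symm
          calc ρ j = Real.sqrt (ρ j) * Real.sqrt (ρ j) := hρj
            _ ≤ r * Real.sqrt (ρ j) :=
              mul_le_mul_of_nonneg_right (Real.sqrt_le_sqrt hle) (Real.sqrt_nonneg _)
      _ = r * ∑ j ∈ Finset.univ.filter (fun j : Fin n => ¬ (j : ℕ) < k - 1), Real.sqrt (ρ j) :=
          (Finset.mul_sum _ _ _).symm
      _ ≤ r * T := by
          apply mul_le_mul_of_nonneg_left _ hr0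
          exact Finset.sum_le_sum_of_subset_of_nonneg (Finset.filter_subset _ _)
            (fun j _ _ => Real.sqrt_nonneg _)
  have hA : S / 2 < r * T := lt_of_lt_of_le htail hB
  have hcard : (Finset.univ.filter (fun j : Fin n => (j : ℕ) < k)).card = k := by
    have : (Finset.univ.filter (fun j : Fin n => (j : ℕ) < k))
        = Finset.map (Fin.castLEEmb hkn) Finset.univ := by
      ext j
      simp only [Finset.mem_filter, Finset.mem_univ, true_and, Finset.mem_map]
      constructor
      · intro hj
        exact ⟨⟨(j : ℕ), hj⟩, Fin.ext rfl⟩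
      · rintro ⟨i, rfl⟩
        simp [i.isLt]
    rw [this, Finset.card_map, Finset.card_univ, Fintype.card_fin]
  have hC : (k : ℝ) * r ≤ T := by
    calc (k : ℝ) * r = ∑ _j ∈ Finset.univ.filter (fun j : Fin n => (j : ℕ) < k), r := by
          rw [Finset.sum_const, hcard, nsmul_eq_mul]
      _ ≤ ∑ j ∈ Finset.univ.filter (fun j : Fin n => (j : ℕ) < k), Real.sqrt (ρ j) := by
          apply Finset.sum_le_sum
          intro j hj
          simp only [Finset.mem_filter, Finset.mem_univ, true_and] at hj
          have hle : ρ m ≤ ρ j := hmono (by simp [Fin.le_def, hmdef]; omega)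
          exact Real.sqrt_le_sqrt hle
      _ ≤ T := Finset.sum_le_sum_of_subset_of_nonneg (Finset.filter_subset _ _)
          (fun j _ _ => Real.sqrt_nonneg _)
  set sd := Real.sqrt d with hsddef
  have hsd0 : 0 < sd := Real.sqrt_pos.mpr hd
  have hsd2 : sd * sd = d := Real.mul_self_sqrt hd.le
  have hT2 : T ≤ 2 * ε⁻¹ * sd := hsqrt
  -- k * S / 2 ≤ k * r * T ≤ T * T ≤ (2 ε⁻¹ sd)^2 = 4 ε⁻² d
  have hk0 : (0:ℝ) ≤ (k:ℝ) := Nat.cast_nonneg k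
  have h1 : (k : ℝ) * (S / 2) ≤ (k : ℝ) * (r * T) :=
    mul_le_mul_of_nonneg_left hA.le hk0
  have h2 : (k : ℝ) * (r * T) ≤ T * T := by
    have := mul_le_mul_of_nonneg_right hC hT0
    linarith [this]
  have h3 : T * T ≤ (2 * ε⁻¹ * sd) * (2 * ε⁻¹ * sd) :=
    mul_le_mul hT2 hT2 hT0 (by positivity)
  have h4 : (k : ℝ) * S ≤ 8 * ε⁻¹ ^ 2 * d := by nlinarith [h1, h2, h3, hsd2]
  have hεinv : ε * ε⁻¹ = 1 := mul_inv_cancel₀ (ne_of_gt hε0)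
  have h5 : (k : ℝ) * (ε ^ 3 / 8) ≤ 8 * ε⁻¹ ^ 2 * d :=
    le_trans (mul_le_mul_of_nonneg_left hsum hk0) h4
  have h6 : (k : ℝ) ≤ 64 * ε⁻¹ ^ 5 * d := by
    have h5' : (k : ℝ) * ε ^ 3 ≤ 64 * ε⁻¹ ^ 2 * d := by linarith
    calc (k : ℝ) = (k : ℝ) * ε ^ 3 * ε⁻¹ ^ 3 := by
          rw [mul_assoc, ← mul_pow, hεinv, one_pow, mul_one]
      _ ≤ (64 * ε⁻¹ ^ 2 * d) * ε⁻¹ ^ 3 := mul_le_mul_of_nonneg_right h5' (by positivity)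
      _ = 64 * ε⁻¹ ^ 5 * d := by ring
  have : (0:ℝ) ≤ ε⁻¹ ^ 5 * d := by positivity
  linarith
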